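/- Define the Burgers hierarchy vector fields X_n on the differential field C{u} by X_n(u) = ∂(Q_n), where Q_n = (∂+u)^n(1). Then for all n, m ≥ 1: X_n(Q_m) = Q_{n+m} − Q_n·Q_m. In particular X_n(Q_m) = X_m(Q_n), i.e., the quantity X_n(Q_m) is symmetric in n and m. -/
import Mathlib


/-- **Burgers hierarchy identity** `X_n(Q_m) = Q_{n+m} − Q_n·Q_m`.  Here
`Q_j = (∂+u)^j(1)` and `X_n`, `X_m` are the evolution derivations of the Burgers
hierarchy: derivations of the differential ring commuting with `∂` and determined
by `X_n(u) = ∂(Q_n)`.  In particular `X_n(Q_m) = X_m(Q_n)` is symmetric in `n, m`. -/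
theorem stmt6 {R : Type*} [CommRing R] (d : R →+ R)
    (hleib : ∀ a b : R, d (a * b) = d a * b + a * d b)
    (u : R) (Q : ℕ → R) (hQ0 : Q 0 = 1) (hQ : ∀ k, Q (k + 1) = d (Q k) + u * Q k)
    (n m : ℕ) (hn : 1 ≤ n) (hm : 1 ≤ m)
    (Xn Xm : R →+ R)
    (hXn_der : ∀ a b : R, Xn (a * b) = Xn a * b + a * Xn b)
    (hXm_der : ∀ a b : R, Xm (a * b) = Xm a * b + a * Xm b)
    (hXn_d : ∀ a : R, Xn (d a) = d (Xn a))
    (hXm_d : ∀ a : R, Xm (d a) = d (Xm a))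
    (hXn_u : Xn u = d (Q n)) (hXm_u : Xm u = d (Q m)) :
    Xn (Q m) = Q (n + m) - Q n * Q m ∧ Xn (Q m) = Xm (Q n) := by
  have key : ∀ (X : R →+ R), (∀ a b : R, X (a * b) = X a * b + a * X b) →
      (∀ a : R, X (d a) = d (X a)) → ∀ k, X u = d (Q k) →
      ∀ j, X (Q j) = Q (k + j) - Q k * Q j := by
    intro X hder hXd k hXu j
    have hX1 : X 1 = 0 := by
      have h := hder 1 1
      simpa using h
    induction j with
    | zero => simp [hQ0, hX1]
    | succ j ih =>
      rw [hQ j, map_add, hXd, hder, hXu, ih, ← Nat.add_assoc, hQ (k + j),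
        map_sub, hleib (Q k) (Q j)]
      ring
  have h1 := key Xn hXn_der hXn_d n hXn_u m
  have h2 := key Xm hXm_der hXm_d m hXm_u n
  refine ⟨h1, ?_⟩
  rw [h1, h2, Nat.add_comm]
  ring
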